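/- Let K be an infinite field, S = K[x_1,…,x_N], I ⊆ S an unmixed radical homogeneous ideal of height h < N, and J = (f_1,…,f_h) ⊆ I generated by a homogeneous regular sequence of degrees d_1 ≤ … ≤ d_h. Suppose for each minimal prime 𝔭_1,…,𝔭_s of I there exist homogeneous g_1,…,g_s with deg(g_t) ≤ D := Σ(d_i − 1) and 𝔭_t = J : g_t. Then there exists a homogeneous g of degree exactly D with I = J : g. -/

import Mathlib

open MvPolynomial

namespace ColonAux

variable {K : Type*} [Field K] {N : ℕ}

open Classical in
/-- The algebra map killing the variables in `s`. -/
noncomputable def killVars (s : Set (Fin N)) :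
    MvPolynomial (Fin N) K →ₐ[K] MvPolynomial {j : Fin N // j ∉ s} K :=
  aeval (fun j => if h : j ∈ s then 0 else X ⟨j, h⟩)

theorem sub_rename_killVars (s : Set (Fin N)) (p : MvPolynomial (Fin N) K) :
    p - rename Subtype.val (killVars s p) ∈ Ideal.span (X '' s) := by
  classical
  induction p using MvPolynomial.induction_on with
  | C c => simp [killVars]
  | add p q hp hq =>
    have h : (p + q) - rename Subtype.val (killVars s (p + q))
        = (p - rename Subtype.val (killVars s p))
          + (q - rename Subtype.val (killVars s q)) := by
      rw [map_add, map_add]; ring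
    rw [h]; exact Ideal.add_mem _ hp hq
  | mul_X p j hp =>
    by_cases hj : j ∈ s
    · have h : killVars (K := K) s (X j) = 0 := by simp [killVars, hj]
      have h2 : p * X j - rename Subtype.val (killVars s (p * X j)) = p * X j := by
        rw [map_mul, h, mul_zero, map_zero, sub_zero]
      rw [h2]
      exact Ideal.mul_mem_left _ _ (Ideal.subset_span ⟨j, hj, rfl⟩)
    · have h : killVars (K := K) s (X j) = X (⟨j, hj⟩ : {j : Fin N // j ∉ s}) := by
        simp [killVars, hj]
      have h2 : p * X j - rename Subtype.val (killVars s (p * X j))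
          = (p - rename Subtype.val (killVars s p)) * X j := by
        rw [map_mul, h, map_mul, rename_X]; ring
      rw [h2]
      exact Ideal.mul_mem_right _ _ hp

theorem ker_killVars (s : Set (Fin N)) :
    RingHom.ker (killVars (K := K) s).toRingHom = Ideal.span (X '' s) := by
  classical
  apply le_antisymm
  · intro p hp
    rw [RingHom.mem_ker] at hp
    have := sub_rename_killVars s p
    rw [show killVars s p = (killVars (K := K) s).toRingHom p from rfl, hp, map_zero,
      sub_zero] at this
    exact this
  · rw [Ideal.span_le]
    rintro _ ⟨j, hj, rfl⟩
    simp [RingHom.mem_ker, killVars, hj]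

theorem span_X_image_isPrime (s : Set (Fin N)) :
    (Ideal.span (X '' s) : Ideal (MvPolynomial (Fin N) K)).IsPrime := by
  rw [← ker_killVars s]
  exact RingHom.ker_isPrime _

theorem X_mem_span_X_image {s : Set (Fin N)} {j : Fin N} (hj : j ∈ s) :
    X j ∈ (Ideal.span (X '' s) : Ideal (MvPolynomial (Fin N) K)) :=
  Ideal.subset_span ⟨j, hj, rfl⟩

theorem X_not_mem_span_X_image {s : Set (Fin N)} {j : Fin N} (hj : j ∉ s) :
    X j ∉ (Ideal.span (X '' s) : Ideal (MvPolynomial (Fin N) K)) := by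
  rw [← ker_killVars s, RingHom.mem_ker]
  have : (killVars (K := K) s).toRingHom (X j) = X (⟨j, hj⟩ : {j : Fin N // j ∉ s}) := by
    simp [killVars, hj]
  rw [this]
  exact MvPolynomial.X_ne_zero _


theorem cast_le_height_of_forall_X_mem (P : Ideal (MvPolynomial (Fin N) K))
    (hP : P.IsPrime) (hX : ∀ j, X j ∈ P) :
    (N : ℕ∞) ≤ Order.height (⟨P, hP⟩ : PrimeSpectrum (MvPolynomial (Fin N) K)) := by
  classical
  set Q : ℕ → Ideal (MvPolynomial (Fin N) K) :=
    fun i => Ideal.span (X '' {j : Fin N | (j : ℕ) < i}) with hQ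
  have hQle : ∀ i, Q i ≤ P := by
    intro i
    rw [hQ, Ideal.span_le]
    rintro _ ⟨j, _, rfl⟩
    exact hX j
  have hQlt : ∀ a b : ℕ, a < b → b ≤ N → Q a < Q b := by
    intro a b hab hbN
    rw [lt_iff_le_and_ne]
    constructor
    · exact Ideal.span_mono (Set.image_mono fun j hj => lt_trans hj hab)
    · intro hcontra
      have h1 : X (⟨a, lt_of_lt_of_le hab hbN⟩ : Fin N) ∈ Q b :=
        Ideal.subset_span ⟨_, by simpa using hab, rfl⟩
      rw [← hcontra] at h1
      exact X_not_mem_span_X_image (by simp) h1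
  have hQltP : ∀ a : ℕ, a < N → Q a < P := by
    intro a haN
    rw [lt_iff_le_and_ne]
    refine ⟨hQle a, fun hcontra => ?_⟩
    have h1 : X (⟨a, haN⟩ : Fin N) ∈ P := hX _
    rw [← hcontra] at h1
    exact X_not_mem_span_X_image (by simp) h1
  let F : Fin (N + 1) → PrimeSpectrum (MvPolynomial (Fin N) K) :=
    fun i => if h : (i : ℕ) < N then ⟨Q i, span_X_image_isPrime _⟩ else ⟨P, hP⟩
  have hmono : StrictMono F := by
    intro a b hab
    have hab' : (a : ℕ) < (b : ℕ) := hab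
    rw [← PrimeSpectrum.asIdeal_lt_asIdeal]
    by_cases hb : (b : ℕ) < N
    · have ha : (a : ℕ) < N := lt_trans hab' hb
      simp only [F, dif_pos ha, dif_pos hb]
      exact hQlt _ _ hab' (le_of_lt hb)
    · have hbn : (b : ℕ) = N := le_antisymm (Nat.lt_succ_iff.mp b.isLt) (not_lt.mp hb)
      have ha : (a : ℕ) < N := by omega
      simp only [F, dif_pos ha, dif_neg hb]
      exact hQltP _ ha
  have hlast : (LTSeries.mk N F hmono).last = (⟨P, hP⟩ : PrimeSpectrum _) := by
    show F (Fin.last N) = _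
    simp [F]
  have := Order.length_le_height_last (p := LTSeries.mk N F hmono)
  rw [hlast] at this
  exact this


theorem mem_associatedPrimes_of_mem_minimalPrimes {R : Type*} [CommRing R] [IsNoetherianRing R]
    {I p : Ideal R} (hp : p ∈ I.minimalPrimes) :
    p ∈ associatedPrimes R (R ⧸ I) := by
  classical
  obtain ⟨⟨hpp, hIp⟩, hmin⟩ := hp
  have hone : (1 : R) ∉ p := fun hc => hpp.ne_top ((Ideal.eq_top_iff_one p).mpr hc)
  -- the contraction of I from the localization at p
  let q : Ideal R :=
    { carrier := {y | ∃ w, w ∉ p ∧ w * y ∈ I}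
      add_mem' := by
        rintro a b ⟨w1, hw1, h1⟩ ⟨w2, hw2, h2⟩
        refine ⟨w1 * w2, fun hc => (hpp.mem_or_mem hc).elim hw1 hw2, ?_⟩
        have h : w1 * w2 * (a + b) = w2 * (w1 * a) + w1 * (w2 * b) := by ring
        rw [h]
        exact I.add_mem (I.mul_mem_left _ h1) (I.mul_mem_left _ h2)
      zero_mem' := ⟨1, hone, by simp⟩
      smul_mem' := by
        rintro c y ⟨w, hw, h⟩
        refine ⟨w, hw, ?_⟩
        rw [smul_eq_mul, show w * (c * y) = c * (w * y) by ring]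
        exact I.mul_mem_left _ h }
  have hqmem : ∀ y : R, y ∈ q ↔ ∃ w, w ∉ p ∧ w * y ∈ I := fun y => Iff.rfl
  have hqp : q ≤ p := by
    rintro y ⟨w, hw, h⟩
    exact (hpp.mem_or_mem (hIp h)).resolve_left hw
  have hqtop : q ≠ ⊤ := fun h => hpp.ne_top (eq_top_iff.mpr (le_trans (h ▸ le_refl q) hqp))
  -- p is contained in the radical of q
  have hprad : p ≤ q.radical := by
    intro y hy
    have hdis : ¬ Disjoint (I : Set R) ((Submonoid.closure (insert y (↑p)ᶜ) : Submonoid R) : Set R) := by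
      intro hdis
      obtain ⟨p', hp', hIp', hdis'⟩ := Ideal.exists_le_prime_disjoint _ _ hdis
      have hyp' : y ∉ p' := fun hc =>
        (Set.disjoint_left.mp hdis' hc) (Submonoid.subset_closure (Set.mem_insert _ _))
      have hp'p : p' ≤ p := by
        intro z hz
        by_contra hzp
        exact (Set.disjoint_left.mp hdis' hz)
          (Submonoid.subset_closure (Set.mem_insert_of_mem _ hzp))
      exact hyp' (hmin ⟨hp', hIp'⟩ hp'p hy)
    rw [Set.not_disjoint_iff] at hdis
    obtain ⟨z, hzI, hzS⟩ := hdis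
    have hform : ∃ w n, w ∉ p ∧ z = w * y ^ n := by
      refine Submonoid.closure_induction ?_ ?_ ?_ hzS
      · rintro x (rfl | hx)
        · exact ⟨1, 1, hone, by ring⟩
        · exact ⟨x, 0, hx, by simp⟩
      · exact ⟨1, 0, hone, by simp⟩
      · rintro x1 x2 hx1 hx2 ⟨w1, n1, hw1, rfl⟩ ⟨w2, n2, hw2, rfl⟩
        exact ⟨w1 * w2, n1 + n2, fun hc => (hpp.mem_or_mem hc).elim hw1 hw2, by ring⟩
    obtain ⟨w, n, hw, rfl⟩ := hform
    rw [Ideal.mem_radical_iff]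
    exact ⟨n, (hqmem _).mpr ⟨w, hw, hzI⟩⟩
  -- minimal n with p ^ n ≤ q
  have hex : ∃ n : ℕ, p ^ n ≤ q := by
    obtain ⟨n, hn⟩ := Ideal.exists_pow_le_of_le_radical_of_fg hprad (IsNoetherian.noetherian p)
    exact ⟨n, hn⟩
  let n0 := Nat.find hex
  have hn0 : p ^ n0 ≤ q := Nat.find_spec hex
  have hn0pos : n0 ≠ 0 := by
    intro hc
    have := hn0
    rw [hc, pow_zero, Ideal.one_eq_top] at this
    exact hqtop (eq_top_iff.mpr this)
  have hlt : ¬ p ^ (n0 - 1) ≤ q := Nat.find_min hex (by omega)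
  obtain ⟨x, hxp, hxq⟩ := SetLike.not_le_iff_exists.mp hlt
  -- the element W killing q into I
  obtain ⟨s, hs⟩ : q.FG := IsNoetherian.noetherian q
  have hws : ∀ z : {z : R // z ∈ s}, ∃ w, w ∉ p ∧ w * (z : R) ∈ I := by
    rintro ⟨z, hz⟩
    exact (hqmem z).mp (hs ▸ Ideal.subset_span hz)
  choose w hw1 hw2 using hws
  set W : R := ∏ z ∈ s.attach, w z with hW
  have hWp : W ∉ p := by
    have : W ∈ p.primeCompl := Submonoid.prod_mem p.primeCompl fun z _ => hw1 z
    exact this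
  have hWq : ∀ z ∈ q, W * z ∈ I := by
    intro z hz
    rw [← hs] at hz
    refine Submodule.span_induction ?_ ?_ ?_ ?_ hz
    · intro u hu
      have h1 : W = w ⟨u, hu⟩ * ∏ z ∈ s.attach.erase ⟨u, hu⟩, w z :=
        (Finset.mul_prod_erase _ _ (Finset.mem_attach _ _)).symm
      rw [show W * u = (∏ z ∈ s.attach.erase ⟨u, hu⟩, w z) * (w ⟨u, hu⟩ * u) by rw [h1]; ring]
      exact I.mul_mem_left _ (hw2 _)
    · simp
    · intro a b _ _ ha hb
      rw [mul_add]
      exact I.add_mem ha hb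
    · intro a u _ hu
      rw [smul_eq_mul, show W * (a * u) = a * (W * u) by ring]
      exact I.mul_mem_left _ hu
  -- conclude
  rw [AssociatedPrimes.mem_iff, isAssociatedPrime_iff]
  refine ⟨hpp, Ideal.Quotient.mk I (W * x), ?_⟩
  ext z
  rw [Submodule.mem_colon_singleton, Submodule.mem_bot]
  have hsmul : z • Ideal.Quotient.mk I (W * x) = Ideal.Quotient.mk I (z * (W * x)) := by
    rfl
  rw [hsmul, Ideal.Quotient.eq_zero_iff_mem]
  constructor
  · intro hz
    have hzx : z * x ∈ p ^ n0 := by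
      have h1 : z * x ∈ p * p ^ (n0 - 1) := Ideal.mul_mem_mul hz hxp
      rwa [← pow_succ', show n0 - 1 + 1 = n0 by omega] at h1
    rw [show z * (W * x) = W * (z * x) by ring]
    exact hWq _ (hn0 hzx)
  · intro hz
    by_contra hzp
    refine hxq ((hqmem x).mpr ⟨z * W, fun hc => (hpp.mem_or_mem hc).elim hzp hWp, ?_⟩)
    rwa [show z * W * x = z * (W * x) by ring]


theorem X_mem_of_linear_forms_mem {K : Type*} [Field K] {N : ℕ}
    (p : Ideal (MvPolynomial (Fin N) K)) (c : Fin N → K) (hc : Function.Injective c)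
    (hl : ∀ j, (∑ i : Fin N, C (c j ^ (i : ℕ)) * X i) ∈ p) (k : Fin N) : X k ∈ p := by
  classical
  set M : Matrix (Fin N) (Fin N) K := Matrix.vandermonde c with hM
  have hdet : IsUnit M.det := (Matrix.det_vandermonde_ne_zero_iff.mpr hc).isUnit
  have hinv : M⁻¹ * M = 1 := Matrix.nonsing_inv_mul M hdet
  have key : (∑ j : Fin N, C (M⁻¹ k j) * (∑ i : Fin N, C (c j ^ (i : ℕ)) * X i))
      = X k := by
    calc (∑ j : Fin N, C (M⁻¹ k j) * (∑ i : Fin N, C (c j ^ (i : ℕ)) * X i))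
        = ∑ j : Fin N, ∑ i : Fin N, C (M⁻¹ k j * M j i) * X i := by
          refine Finset.sum_congr rfl fun j _ => ?_
          rw [Finset.mul_sum]
          refine Finset.sum_congr rfl fun i _ => ?_
          rw [map_mul, mul_assoc]
          rfl
      _ = ∑ i : Fin N, ∑ j : Fin N, C (M⁻¹ k j * M j i) * X i := by rw [Finset.sum_comm]
      _ = ∑ i : Fin N, C ((M⁻¹ * M) k i) * X i := by
          refine Finset.sum_congr rfl fun i _ => ?_
          rw [Matrix.mul_apply, map_sum, Finset.sum_mul]
      _ = X k := by
          rw [hinv]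
          rw [Finset.sum_eq_single k]
          · simp [Matrix.one_apply]
          · intro b _ hb
            simp [Matrix.one_apply, (Ne.symm hb)]
          · simp
  rw [← key]
  exact Ideal.sum_mem _ fun j _ => Ideal.mul_mem_left _ _ (hl j)


end ColonAux

theorem exists_colon_element (K : Type*) [Field K] [Infinite K] (N h : ℕ)
    (hh : 1 ≤ h) (hhN : h < N)
    (I : Ideal (MvPolynomial (Fin N) K))
    (hhom : ∀ p ∈ I, ∀ n : ℕ,
      (((p : MvPolynomial (Fin N) K).homogeneousComponent n : MvPolynomial (Fin N) K)) ∈ I)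
    (hrad : I.IsRadical) (hproper : I ≠ ⊤)
    (hunmixed : ∀ P : PrimeSpectrum (MvPolynomial (Fin N) K),
      P.asIdeal ∈ associatedPrimes (MvPolynomial (Fin N) K)
        (MvPolynomial (Fin N) K ⧸ I) → Order.height P = (h : ℕ∞))
    (f : Fin h → MvPolynomial (Fin N) K) (d : Fin h → ℕ) (hmono : Monotone d)
    (hfhom : ∀ i, (f i).IsHomogeneous (d i))
    (hreg : RingTheory.Sequence.IsRegular (MvPolynomial (Fin N) K) (List.ofFn f))
    (J : Ideal (MvPolynomial (Fin N) K)) (hJ : J = Ideal.span (Set.range f))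
    (hJI : J ≤ I)
    (D : ℕ) (hD : D = ∑ i, (d i - 1))
    (hmin : ∀ p ∈ I.minimalPrimes, ∃ (g : MvPolynomial (Fin N) K) (e : ℕ),
      e ≤ D ∧ g.IsHomogeneous e ∧ p = J.colon (Ideal.span {g})) :
    ∃ g : MvPolynomial (Fin N) K, g.IsHomogeneous D ∧ I = J.colon (Ideal.span {g}) := by
  classical
  have hfin : I.minimalPrimes.Finite := by
    rw [Ideal.minimalPrimes_eq_comap]
    exact (minimalPrimes.finite_of_isNoetherianRing _).image _
  -- no minimal prime contains all the variables
  have hnotall : ∀ p ∈ I.minimalPrimes, ∃ j, X j ∉ p := by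
    intro p hp
    by_contra hc
    push_neg at hc
    have hpp : p.IsPrime := hp.1.1
    have h1 : (N : ℕ∞) ≤ Order.height (⟨p, hpp⟩ : PrimeSpectrum _) :=
      ColonAux.cast_le_height_of_forall_X_mem p hpp hc
    rw [hunmixed ⟨p, hpp⟩ (ColonAux.mem_associatedPrimes_of_mem_minimalPrimes hp)] at h1
    exact absurd (Nat.cast_le.mp h1) (by omega)
  -- a linear form avoiding all the minimal primes
  have hbadfin : ∀ p ∈ I.minimalPrimes,
      {c : K | (∑ i : Fin N, C (c ^ (i : ℕ)) * X i) ∈ p}.Finite := by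
    intro p hp
    by_contra hinf
    have hinf' : {c : K | (∑ i : Fin N, C (c ^ (i : ℕ)) * X i) ∈ p}.Infinite := hinf
    have := hinf'.to_subtype
    set e := Infinite.natEmbedding {c : K | (∑ i : Fin N, C (c ^ (i : ℕ)) * X i) ∈ p} with he
    set c : Fin N → K := fun i => (e (i : ℕ) : K) with hcdef
    have hcinj : Function.Injective c := by
      intro i j hij
      exact Fin.val_injective (e.injective (Subtype.ext hij))
    have hl : ∀ j, (∑ i : Fin N, C (c j ^ (i : ℕ)) * X i) ∈ p := fun j => (e (j : ℕ)).2
    obtain ⟨j, hj⟩ := hnotall p hp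
    exact hj (ColonAux.X_mem_of_linear_forms_mem p c hcinj hl j)
  obtain ⟨c0, hc0⟩ : ∃ c : K,
      c ∉ ⋃ p ∈ I.minimalPrimes, {c : K | (∑ i : Fin N, C (c ^ (i : ℕ)) * X i) ∈ p} := by
    obtain ⟨c, hc⟩ := (Set.Finite.infinite_compl (Set.Finite.biUnion hfin hbadfin)).nonempty
    exact ⟨c, hc⟩
  set ℓ : MvPolynomial (Fin N) K := ∑ i : Fin N, C (c0 ^ (i : ℕ)) * X i with hℓdef
  have hℓhom : ℓ.IsHomogeneous 1 := by
    apply IsHomogeneous.sum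
    intro i _
    simpa using (isHomogeneous_C _ (c0 ^ (i : ℕ))).mul (isHomogeneous_X _ i)
  have hℓ : ∀ p ∈ I.minimalPrimes, ℓ ∉ p := by
    intro p hp hmem
    exact hc0 (Set.mem_biUnion hp hmem)
  -- the chosen data for each minimal prime
  choose gP eP heD hghom hcolon using hmin
  set F := hfin.toFinset with hF
  have hFmem : ∀ p, p ∈ F ↔ p ∈ I.minimalPrimes := fun p => hfin.mem_toFinset
  set A : {q // q ∈ F} → MvPolynomial (Fin N) K :=
    fun q => ℓ ^ (D - eP q.1 ((hFmem q.1).mp q.2)) * gP q.1 ((hFmem q.1).mp q.2) with hA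
  refine ⟨∑ q ∈ F.attach, A q, ?_, ?_⟩
  · -- homogeneity of degree D
    apply IsHomogeneous.sum
    intro q _
    have hq := (hFmem q.1).mp q.2
    have h1 := (hℓhom.pow (D - eP q.1 hq)).mul (hghom q.1 hq)
    have h2 : A q = ℓ ^ (D - eP q.1 hq) * gP q.1 hq := rfl
    rw [h2]
    rwa [one_mul, Nat.sub_add_cancel (heD q.1 hq)] at h1
  · -- I = J : g
    have hsInf : sInf I.minimalPrimes = I := by
      rw [Ideal.sInf_minimalPrimes, Ideal.IsRadical.radical hrad]
    apply le_antisymm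
    · intro r hr
      rw [Ideal.mem_colon_span_singleton, Finset.mul_sum]
      refine Ideal.sum_mem _ fun q _ => ?_
      have hq := (hFmem q.1).mp q.2
      have hrg : r * gP q.1 hq ∈ J := by
        rw [← Ideal.mem_colon_span_singleton, ← hcolon q.1 hq]
        exact hq.1.2 hr
      have h2 : A q = ℓ ^ (D - eP q.1 hq) * gP q.1 hq := rfl
      rw [h2, show r * (ℓ ^ (D - eP q.1 hq) * gP q.1 hq)
        = ℓ ^ (D - eP q.1 hq) * (r * gP q.1 hq) by ring]
      exact J.mul_mem_left _ hrg
    · intro r hr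
      rw [Ideal.mem_colon_span_singleton] at hr
      rw [← hsInf, Submodule.mem_sInf]
      intro p hp
      have hp : p ∈ I.minimalPrimes := hp
      by_contra hrp
      have hpp : Ideal.IsPrime p := hp.1.1
      haveI := hpp
      set pa : {q // q ∈ F} := ⟨p, (hFmem p).mpr hp⟩ with hpa
      have hp' : p ∈ I.minimalPrimes := (hFmem p).mp pa.2
      -- elements of the other minimal primes avoiding p
      have hy : ∀ q : {q // q ∈ F}, q ∈ F.attach.erase pa → ∃ y, y ∈ q.1 ∧ y ∉ p := by
        intro q hq
        have hqmem := (hFmem q.1).mp q.2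
        have hne : q.1 ≠ p := fun hc => (Finset.ne_of_mem_erase hq) (Subtype.ext hc)
        have hnle : ¬ q.1 ≤ p := fun hle => hne (le_antisymm hle (hp.2 hqmem.1 hle))
        obtain ⟨y, hy1, hy2⟩ := SetLike.not_le_iff_exists.mp hnle
        exact ⟨y, hy1, hy2⟩
      choose y hy1 hy2 using hy
      set x : MvPolynomial (Fin N) K := ∏ q ∈ (F.attach.erase pa).attach, y q.1 q.2 with hx
      have hxp : x ∉ p := by
        have : x ∈ (Ideal.primeCompl p) := Submonoid.prod_mem (Ideal.primeCompl p) fun q _ => hy2 q.1 q.2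
        exact this
      -- off-diagonal terms are in J
      have hoff : ∀ q ∈ F.attach.erase pa, x * r * A q ∈ J := by
        intro q hqe
        have hq := (hFmem q.1).mp q.2
        have hyg : y q hqe * gP q.1 hq ∈ J := by
          rw [← Ideal.mem_colon_span_singleton, ← hcolon q.1 hq]
          exact hy1 q hqe
        have hxsplit : x = y q hqe * ∏ q' ∈ ((F.attach.erase pa).attach).erase ⟨q, hqe⟩,
            y q'.1 q'.2 := (Finset.mul_prod_erase _ _ (Finset.mem_attach _ ⟨q, hqe⟩)).symm
        have heq : x * r * A q = ((∏ q' ∈ ((F.attach.erase pa).attach).erase ⟨q, hqe⟩,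
            y q'.1 q'.2) * r * ℓ ^ (D - eP q.1 hq)) * (y q hqe * gP q.1 hq) := by
          rw [show A q = ℓ ^ (D - eP q.1 hq) * gP q.1 hq from rfl, hxsplit]
          ring
        rw [heq]
        exact J.mul_mem_left _ hyg
      -- the diagonal term is in J
      have h1 : x * r * A pa + ∑ q ∈ F.attach.erase pa, x * r * A q
          = ∑ q ∈ F.attach, x * r * A q :=
        Finset.add_sum_erase F.attach (fun q => x * r * A q) (Finset.mem_attach _ pa)
      have h2 : x * r * A pa ∈ J := by
        have hxrg : ∑ q ∈ F.attach, x * r * A q ∈ J := by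
          rw [← Finset.mul_sum, mul_assoc]
          exact J.mul_mem_left _ hr
        have := J.sub_mem hxrg (Ideal.sum_mem _ hoff)
        rwa [← h1, add_sub_cancel_right] at this
      -- contradiction
      obtain ⟨k, gpa, hk, hgpa⟩ : ∃ (k : ℕ) (gpa : MvPolynomial (Fin N) K),
          A pa = ℓ ^ k * gpa ∧ p = Submodule.colon J (Ideal.span {gpa}) :=
        ⟨D - eP p hp', gP p hp', rfl, hcolon p hp'⟩
      have h3 : x * r * ℓ ^ k ∈ p := by
        rw [hgpa, Ideal.mem_colon_span_singleton]
        rw [show x * r * ℓ ^ k * gpa = x * r * (ℓ ^ k * gpa) by ring, ← hk]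
        exact h2
      have h5 : x * r * ℓ ^ k ∈ Ideal.primeCompl p :=
        Submonoid.mul_mem _ (Submonoid.mul_mem _ hxp hrp) (Submonoid.pow_mem _ (hℓ p hp') _)
      exact h5 h3
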